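/- For the non-Markovian absorbing diffusion, where each x_τ (τ = t,...,T) is independently set to the mask symbol m with probability α_τ and otherwise set equal to x_0, the conditional entropy of x_0 given the suffix satisfies H(x_0 | x_{t:T}) = (∏_{τ=t}^{T} α_τ) · H(x_0). -/

import Mathlib

open Finset

/-- Shannon entropy of a finitely supported weight function (natural log). -/
noncomputable def entropy {X : Type*} [Fintype X] (q : X → ℝ) : ℝ :=
  -∑ x, q x * Real.log (q x)

/-- For the non-Markovian absorbing diffusion, where each suffix coordinate `x_τ`
(indexed by `i : Fin n`) is independently the mask (`none`) with probability `α i`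
and equal to `x_0` otherwise, the conditional entropy
`H(x_0 | x_{t:T}) = H(x_0, x_{t:T}) - H(x_{t:T})` equals `(∏ i, α i) · H(x_0)`. -/
theorem nonmarkov_absorbing_conditional_entropy
    {V : Type*} [Fintype V] [DecidableEq V] (n : ℕ)
    (p : V → ℝ) (hp : ∀ v, 0 ≤ p v) (hsum : ∑ v, p v = 1)
    (α : Fin n → ℝ) (hα : ∀ i, 0 ≤ α i ∧ α i ≤ 1)
    (joint : V × (Fin n → Option V) → ℝ)
    (hjoint : ∀ v f, joint (v, f) =
      p v * ∏ i, (match f i with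
        | none => α i
        | some w => if w = v then 1 - α i else 0))
    (marg : (Fin n → Option V) → ℝ)
    (hmarg : ∀ f, marg f = ∑ v, joint (v, f)) :
    entropy joint - entropy marg = (∏ i, α i) * entropy p := by
  classical
  set A := ∏ i, α i with hA
  have hA0 : 0 ≤ A := Finset.prod_nonneg (fun i _ => (hα i).1)
  have hj : entropy joint =
      -∑ f : Fin n → Option V, ∑ v, joint (v, f) * Real.log (joint (v, f)) := by
    rw [entropy, Fintype.sum_prod_type_right]
  have key : ∑ f : Fin n → Option V,
      (marg f * Real.log (marg f) - ∑ v, joint (v, f) * Real.log (joint (v, f)))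
      = A * entropy p := by
    rw [Finset.sum_eq_single (fun _ => (none : Option V))]
    · -- main term f = const none
      have hjn : ∀ v, joint (v, fun _ => none) = p v * A := by
        intro v; rw [hjoint]
      have hmn : marg (fun _ => none) = A := by
        rw [hmarg]
        simp only [hjn]
        rw [← Finset.sum_mul, hsum, one_mul]
      rcases eq_or_lt_of_le hA0 with h0 | hpos
      · simp only [hjn, hmn, ← h0, mul_zero, zero_mul, Real.log_zero,
          Finset.sum_const_zero, sub_zero, entropy]
      · have hptw : ∀ v, (p v * A) * Real.log (p v * A)
            = A * (p v * Real.log (p v)) + (p v * A) * Real.log A := by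
          intro v
          rcases eq_or_lt_of_le (hp v) with h | h
          · rw [← h]; ring_nf
          · rw [Real.log_mul (ne_of_gt h) (ne_of_gt hpos)]; ring
        simp only [hjn, hmn, hptw, Finset.sum_add_distrib, ← Finset.mul_sum]
        rw [← Finset.sum_mul, ← Finset.sum_mul, hsum, entropy]
        ring
    · -- other terms vanish
      intro f _ hf
      have hex : ∃ i, f i ≠ none := Function.ne_iff.mp hf
      obtain ⟨i0, hi0⟩ := hex
      obtain ⟨w0, hw0⟩ := Option.ne_none_iff_exists'.mp hi0
      have hz : ∀ v, v ≠ w0 → joint (v, f) = 0 := by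
        intro v hv
        rw [hjoint]
        rw [Finset.prod_eq_zero (Finset.mem_univ i0), mul_zero]
        rw [hw0]
        exact if_neg (fun h => hv h.symm)
      have hm : marg f = joint (w0, f) := by
        rw [hmarg]
        exact Finset.sum_eq_single w0 (fun v _ hv => hz v hv)
          (fun h => absurd (Finset.mem_univ _) h)
      have hs : ∑ v, joint (v, f) * Real.log (joint (v, f))
          = joint (w0, f) * Real.log (joint (w0, f)) := by
        refine Finset.sum_eq_single w0 (fun v _ hv => ?_)
          (fun h => absurd (Finset.mem_univ _) h)
        rw [hz v hv, zero_mul]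
      rw [hm, hs, sub_self]
    · intro h; exact absurd (Finset.mem_univ _) h
  have hsub : ∑ f : Fin n → Option V,
      (marg f * Real.log (marg f) - ∑ v, joint (v, f) * Real.log (joint (v, f)))
      = ∑ f : Fin n → Option V, marg f * Real.log (marg f)
        - ∑ f : Fin n → Option V, ∑ v, joint (v, f) * Real.log (joint (v, f)) :=
    Finset.sum_sub_distrib _ _
  rw [hsub] at key
  rw [hj, entropy]
  linarith [key]
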